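/- Assume τ is strongly continuous and that the centre of A is trivial, i.e. every element of A that commutes with all elements of A is a complex scalar multiple of the identity. Then an H-equivariant continuous function f ∈ F̂ commutes with every element of F̂ (under the pointwise product) if and only if there exists a continuous function φ : G → ℂ satisfying φ(h·g) = φ(g) for all h ∈ H, g ∈ G, such that f(g) = φ(g)·1 for all g ∈ G. (In other words, the centre of the augmented algebra F̂ = Γ(G ×_H F) is the algebra C(H\G) of continuous scalar functions on the coset space H\G.) -/

import Mathlib

/-!
STATEMENT 9: If the centre of `A` is trivial, then an `H`-equivariant continuous
function `f ∈ F̂` is central in `F̂` iff `f(g) = φ(g)·1` for a continuous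
`H`-invariant scalar function `φ : G → ℂ`; i.e. the centre of the augmented algebra
`F̂ = Γ(G ×_H F)` is `C(H\G)`.
-/

/-- `H`-equivariance of a continuous function `f : G → A`. -/
def IsEquivariant {G A : Type*} [Group G] [TopologicalSpace G]
    [NormedRing A] [StarRing A] [NormedAlgebra ℂ A]
    (τ : G → (A ≃⋆ₐ[ℂ] A)) (H : Subgroup G) (f : G → A) : Prop :=
  Continuous f ∧ ∀ h ∈ H, ∀ g : G, f (h * g) = τ h (f g)

theorem stmt9 {G A : Type*} [Group G] [TopologicalSpace G] [IsTopologicalGroup G]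
    [CStarAlgebra A]
    (τ : G → (A ≃⋆ₐ[ℂ] A))
    (hτ : ∀ g g' : G, τ (g * g') = (τ g').trans (τ g))
    (hcont : ∀ a : A, Continuous fun g : G => τ g a)  -- strong continuity
    -- the centre of A is trivial
    (hcentre : ∀ a : A, (∀ b : A, a * b = b * a) → ∃ c : ℂ, a = c • (1 : A))
    (H : Subgroup G)
    (f : G → A) (hf : IsEquivariant τ H f) :
    (∀ f' : G → A, IsEquivariant τ H f' → f * f' = f' * f) ↔
    ∃ φ : G → ℂ, Continuous φ ∧ (∀ h ∈ H, ∀ g : G, φ (h * g) = φ g) ∧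
      ∀ g : G, f g = φ g • (1 : A) := by
  constructor
  · intro hcomm
    rcases subsingleton_or_nontrivial A with hA | hA
    · exact ⟨0, continuous_const, fun _ _ _ => rfl, fun g => Subsingleton.elim _ _⟩
    · have key : ∀ g, ∃ c : ℂ, f g = c • 1 := by
        intro g
        apply hcentre
        intro b
        have hf' : IsEquivariant τ H (fun x => τ x ((τ g).symm b)) :=
          ⟨hcont _, fun h _ x => by show τ (h * x) ((τ g).symm b) = _; rw [hτ]; rfl⟩
        have := congrFun (hcomm _ hf') g
        simpa using this
      choose φ hφ using key
      have hinj : Function.Injective (fun c : ℂ => c • (1 : A)) := by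
        intro c c' hcc
        have : algebraMap ℂ A c = algebraMap ℂ A c' := by
          simpa [Algebra.algebraMap_eq_smul_one] using hcc
        exact (algebraMap ℂ A).injective this
      refine ⟨φ, ?_, ?_, hφ⟩
      · have hiso : Isometry (algebraMap ℂ A) := algebraMap_isometry ℂ A
        rw [hiso.isEmbedding.continuous_iff]
        have : (algebraMap ℂ A) ∘ φ = f := by
          funext g
          simp [Algebra.algebraMap_eq_smul_one, ← hφ g]
        rw [this]
        exact hf.1
      · intro h hh g
        apply hinj
        simp only
        rw [← hφ, ← hφ, hf.2 h hh g, hφ g, map_smul, map_one]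
  · rintro ⟨φ, _, _, hφ⟩ f' _
    funext g
    simp [hφ g, smul_mul_assoc, mul_smul_comm]
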